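/- For any m and any digit shift σ ∈ {0,1}^m, the digit-shifted Van der Corput set, consisting of all 2^m points (0.x₁…x_m, 0.y_m…y₁) with y_k = x_k + σ_k (mod 2), is a binary (0,m,2)-net. -/

import Mathlib

open Finset

/-- The dyadic rectangle `[m₁/2^k₁,(m₁+1)/2^k₁) × [m₂/2^k₂,(m₂+1)/2^k₂)` as a subset of the plane. -/
def dyadicRect (k₁ m₁ k₂ m₂ : ℕ) : Set (ℝ × ℝ) :=
  Set.Ico ((m₁ : ℝ) / 2 ^ k₁) (((m₁ : ℝ) + 1) / 2 ^ k₁) ×ˢ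
    Set.Ico ((m₂ : ℝ) / 2 ^ k₂) (((m₂ : ℝ) + 1) / 2 ^ k₂)

/-- The point `(0.x₁x₂…x_m, 0.y_m y_{m-1}…y₁)` of the digit-shifted Van der Corput set, where
`y_k = x_k + σ_k (mod 2)`, determined by the binary digits `x : Fin m → ℕ` and the digit
shift `σ : Fin m → ℕ` (zero-based indices). -/
noncomputable def shiftedVdcPoint (m : ℕ) (σ x : Fin m → ℕ) : ℝ × ℝ :=
  (∑ i, (x i : ℝ) / 2 ^ ((i : ℕ) + 1),
   ∑ i, (((x i + σ i) % 2 : ℕ) : ℝ) * 2 ^ (i : ℕ) / 2 ^ m)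

namespace SVdC

def val (n : ℕ) (X : ℕ → ℕ) : ℕ := ∑ i ∈ Finset.range n, X i * 2 ^ i

lemma val_congr {n : ℕ} {X X' : ℕ → ℕ} (h : ∀ i < n, X i = X' i) : val n X = val n X' :=
  Finset.sum_congr rfl fun i hi => by rw [h i (Finset.mem_range.mp hi)]

lemma val_lt {n : ℕ} {X : ℕ → ℕ} (h : ∀ i < n, X i < 2) : val n X < 2 ^ n := by
  induction n with
  | zero => simp [val]
  | succ n ih =>
    have h1 : val n X < 2 ^ n := ih fun i hi => h i (hi.trans (Nat.lt_succ_self n))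
    have h2 : X n * 2 ^ n ≤ 1 * 2 ^ n :=
      Nat.mul_le_mul_right _ (by have := h n (Nat.lt_succ_self n); omega)
    have h3 : val (n+1) X = val n X + X n * 2 ^ n := Finset.sum_range_succ _ n
    rw [h3, pow_succ]
    linarith

lemma val_inj {n : ℕ} {X X' : ℕ → ℕ} (hX : ∀ i < n, X i < 2) (hX' : ∀ i < n, X' i < 2)
    (h : val n X = val n X') : ∀ i < n, X i = X' i := by
  induction n with
  | zero => omega
  | succ n ih =>
    have e1 : val (n+1) X = val n X + X n * 2 ^ n := Finset.sum_range_succ _ n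
    have e2 : val (n+1) X' = val n X' + X' n * 2 ^ n := Finset.sum_range_succ _ n
    have l1 : val n X < 2 ^ n := val_lt fun i hi => hX i (by omega)
    have l2 : val n X' < 2 ^ n := val_lt fun i hi => hX' i (by omega)
    have b1 := hX n (Nat.lt_succ_self n)
    have b2 := hX' n (Nat.lt_succ_self n)
    rw [e1, e2] at h
    have hn : X n = X' n := by
      have hc1 : X n = 0 ∨ X n = 1 := by omega
      have hc2 : X' n = 0 ∨ X' n = 1 := by omega
      rcases hc1 with h1 | h1 <;> rcases hc2 with h2 | h2 <;>
        rw [h1, h2] at h ⊢ <;> simp at h ⊢ <;> linarith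
    have hrest : val n X = val n X' := by
      rw [hn] at h; exact Nat.add_right_cancel h
    intro i hi
    rcases Nat.lt_succ_iff_lt_or_eq.mp hi with hi' | hi'
    · exact ih (fun i hi => hX i (by omega)) (fun i hi => hX' i (by omega)) hrest i hi'
    · subst hi'; exact hn

lemma val_bits : ∀ n v, v < 2 ^ n → val n (fun i => v / 2 ^ i % 2) = v := by
  intro n
  induction n with
  | zero => intro v hv; interval_cases v; simp [val]
  | succ n ih =>
    intro v hv
    have hs : ∀ i : ℕ, v / 2 ^ (i+1) % 2 * 2 ^ (i+1) = 2 * (v / 2 / 2 ^ i % 2 * 2 ^ i) := by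
      intro i
      rw [Nat.div_div_eq_div_mul, show 2 * 2 ^ i = 2 ^ (i+1) by rw [pow_succ]; ring]
      ring
    rw [val, Finset.sum_range_succ']
    simp only [hs]
    rw [← Finset.mul_sum]
    have hv2 : v / 2 < 2 ^ n := by
      have : 2 ^ (n+1) = 2 * 2 ^ n := by rw [pow_succ]; ring
      omega
    have := ih (v / 2) hv2
    rw [val] at this
    rw [this]
    simp
    omega

lemma val_surj {n v : ℕ} (hv : v < 2 ^ n) :
    ∃ X : ℕ → ℕ, (∀ i, X i < 2) ∧ val n X = v :=
  ⟨fun i => v / 2 ^ i % 2, fun _ => Nat.mod_lt _ (by norm_num), val_bits n v hv⟩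

lemma val_split {n j : ℕ} (hj : j ≤ n) (X : ℕ → ℕ) :
    val n X = val j X + 2 ^ j * val (n - j) (fun i => X (j + i)) := by
  rw [val, val, val, ← Finset.sum_range_add_sum_Ico _ hj, Finset.sum_Ico_eq_sum_range]
  congr 1
  rw [Finset.mul_sum]
  refine Finset.sum_congr rfl fun i _ => ?_
  rw [pow_add]
  ring

def dig (m : ℕ) (x : Fin m → ℕ) : ℕ → ℕ := fun i => if h : i < m then x ⟨i, h⟩ else 0

lemma dig_lt {m : ℕ} {x : Fin m → ℕ} (hx : ∀ i, x i < 2) (i : ℕ) : dig m x i < 2 := by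
  unfold dig; split
  · exact hx _
  · omega

lemma dig_coe {m : ℕ} (x : Fin m → ℕ) (i : Fin m) : dig m x (i : ℕ) = x i := by
  simp [dig, i.isLt]

noncomputable def RA (m : ℕ) (x : Fin m → ℕ) : ℕ := val m (fun i => dig m x (m - 1 - i))
noncomputable def RB (m : ℕ) (σ x : Fin m → ℕ) : ℕ :=
  val m (fun i => (dig m x i + dig m σ i) % 2)

lemma point_eq (m : ℕ) (σ x : Fin m → ℕ) :
    shiftedVdcPoint m σ x = ((RA m x : ℝ) / 2 ^ m, (RB m σ x : ℝ) / 2 ^ m) := by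
  unfold shiftedVdcPoint RA RB val
  refine Prod.ext ?_ ?_
  · show (∑ i : Fin m, (x i : ℝ) / 2 ^ ((i : ℕ) + 1)) = _
    have step1 : (∑ i : Fin m, (x i : ℝ) / 2 ^ ((i : ℕ) + 1))
        = ∑ i ∈ Finset.range m, (dig m x i : ℝ) / 2 ^ (i + 1) := by
      rw [← Fin.sum_univ_eq_sum_range (fun i => (dig m x i : ℝ) / 2 ^ (i + 1)) m]
      exact Finset.sum_congr rfl fun i _ => by rw [dig_coe]
    rw [step1]
    push_cast
    rw [Finset.sum_div]
    rw [← Finset.sum_range_reflect (fun i => (dig m x i : ℝ) / 2 ^ (i + 1)) m]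
    refine Finset.sum_congr rfl fun i hi => ?_
    have him := Finset.mem_range.mp hi
    rw [show m - 1 - i + 1 = m - i from by omega,
      div_eq_div_iff (by positivity) (by positivity), mul_assoc, ← pow_add,
      show i + (m - i) = m from by omega]
  · show (∑ i : Fin m, (((x i + σ i) % 2 : ℕ) : ℝ) * 2 ^ (i : ℕ) / 2 ^ m) = _
    have step1 : (∑ i : Fin m, (((x i + σ i) % 2 : ℕ) : ℝ) * 2 ^ (i : ℕ) / 2 ^ m)
        = ∑ i ∈ Finset.range m, (((dig m x i + dig m σ i) % 2 : ℕ) : ℝ) * 2 ^ i / 2 ^ m := by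
      rw [← Fin.sum_univ_eq_sum_range
        (fun i => (((dig m x i + dig m σ i) % 2 : ℕ) : ℝ) * 2 ^ i / 2 ^ m) m]
      exact Finset.sum_congr rfl fun i _ => by rw [dig_coe, dig_coe]
    rw [step1]
    push_cast
    rw [Finset.sum_div]

end SVdC

namespace SVdC

lemma rconv (mm k l A a : ℕ) (hm : k + l = mm) :
    ((A : ℝ) / 2 ^ mm ∈ Set.Ico ((a : ℝ) / 2 ^ k) (((a : ℝ) + 1) / 2 ^ k)) ↔
      a * 2 ^ l ≤ A ∧ A < (a + 1) * 2 ^ l := by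
  subst hm
  have hk : (0 : ℝ) < 2 ^ k := by positivity
  have hl : (0 : ℝ) < 2 ^ l := by positivity
  rw [Set.mem_Ico, show ((A : ℝ) / 2 ^ (k + l)) = A / 2 ^ l / 2 ^ k by rw [pow_add]; ring,
    div_le_div_iff_of_pos_right hk, div_lt_div_iff_of_pos_right hk, le_div_iff₀ hl, div_lt_iff₀ hl]
  constructor <;> rintro ⟨h1, h2⟩ <;> exact ⟨by exact_mod_cast h1, by exact_mod_cast h2⟩

lemma quot_iff {P H L a : ℕ} (hP : 0 < P) (hL : L < P) :
    (a * P ≤ L + P * H ∧ L + P * H < (a + 1) * P) ↔ H = a := by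
  constructor
  · rintro ⟨h1, h2⟩
    have hd := Nat.div_eq_of_lt_le h1 h2
    rwa [Nat.add_mul_div_left _ _ hP, Nat.div_eq_of_lt hL, zero_add] at hd
  · rintro rfl
    refine ⟨by rw [Nat.mul_comm]; exact Nat.le_add_left _ _, ?_⟩
    calc L + P * H < P + P * H := Nat.add_lt_add_right hL _
    _ = (H + 1) * P := by ring

noncomputable def HA (m j : ℕ) (x : Fin m → ℕ) : ℕ := val j (fun i => dig m x (j - 1 - i))
noncomputable def GB (m j : ℕ) (σ x : Fin m → ℕ) : ℕ :=
  val (m - j) (fun i => (dig m x (j + i) + dig m σ (j + i)) % 2)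

lemma RA_decomp {m j : ℕ} (hj : j ≤ m) (x : Fin m → ℕ) :
    RA m x = val (m - j) (fun i => dig m x (m - 1 - i)) + 2 ^ (m - j) * HA m j x := by
  rw [RA, val_split (Nat.sub_le m j) (fun i => dig m x (m - 1 - i)),
    show m - (m - j) = j from by omega]
  congr 1
  congr 1
  exact val_congr fun i hi => by congr 1; omega

lemma RB_decomp {m j : ℕ} (hj : j ≤ m) (σ x : Fin m → ℕ) :
    RB m σ x = val j (fun i => (dig m x i + dig m σ i) % 2) + 2 ^ j * GB m j σ x := by
  rw [RB, val_split hj]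
  rfl

lemma mem_rect_iff {m j a b : ℕ} (σ x : Fin m → ℕ) (hσ : ∀ i, σ i < 2) (hx : ∀ i, x i < 2)
    (hj : j ≤ m) :
    shiftedVdcPoint m σ x ∈ dyadicRect j a (m - j) b ↔ HA m j x = a ∧ GB m j σ x = b := by
  rw [point_eq, dyadicRect, Set.mem_prod]
  have hA : ((RA m x : ℝ) / 2 ^ m ∈
      Set.Ico ((a : ℝ) / 2 ^ j) (((a : ℝ) + 1) / 2 ^ j)) ↔ HA m j x = a := by
    rw [rconv m j (m - j) _ a (by omega), RA_decomp hj]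
    exact quot_iff (Nat.pow_pos (by norm_num))
      (val_lt fun i _ => dig_lt hx _)
  have hB : ((RB m σ x : ℝ) / 2 ^ m ∈
      Set.Ico ((b : ℝ) / 2 ^ (m - j)) (((b : ℝ) + 1) / 2 ^ (m - j))) ↔ GB m j σ x = b := by
    rw [rconv m (m - j) j _ b (by omega), RB_decomp hj]
    exact quot_iff (Nat.pow_pos (by norm_num))
      (val_lt fun i _ => Nat.mod_lt _ (by norm_num))
  exact and_congr hA hB

end SVdC

namespace SVdC

lemma eq_of_HA_GB {m j : ℕ} (σ x x' : Fin m → ℕ) (hσ : ∀ i, σ i < 2)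
    (hx : ∀ i, x i < 2) (hx' : ∀ i, x' i < 2) (hj : j ≤ m)
    (h1 : HA m j x = HA m j x') (h2 : GB m j σ x = GB m j σ x') : x = x' := by
  funext i
  rcases lt_or_ge (i : ℕ) j with hij | hij
  · have := val_inj (fun k _ => dig_lt hx _) (fun k _ => dig_lt hx' _) h1
      (j - 1 - (i : ℕ)) (by omega)
    rw [show j - 1 - (j - 1 - (i : ℕ)) = (i : ℕ) from by omega, dig_coe, dig_coe] at this
    exact this
  · have := val_inj (fun k _ => Nat.mod_lt _ (by norm_num))
      (fun k _ => Nat.mod_lt _ (by norm_num)) h2 ((i : ℕ) - j) (by omega)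
    simp only [show j + ((i : ℕ) - j) = (i : ℕ) from by omega, dig_coe] at this
    have b1 := hx i; have b2 := hx' i; have b3 := hσ i
    omega

lemma exists_x {m j a b : ℕ} (σ : Fin m → ℕ) (hσ : ∀ i, σ i < 2) (hj : j ≤ m)
    (ha : a < 2 ^ j) (hb : b < 2 ^ (m - j)) :
    ∃ x : Fin m → ℕ, (∀ i, x i < 2) ∧ HA m j x = a ∧ GB m j σ x = b := by
  obtain ⟨U, hU, hUa⟩ := val_surj ha
  obtain ⟨V, hV, hVb⟩ := val_surj hb
  refine ⟨fun i => if (i : ℕ) < j then U (j - 1 - (i : ℕ)) else (V ((i : ℕ) - j) + σ i) % 2,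
    fun i => ?_, ?_, ?_⟩
  · dsimp only; split
    · exact hU _
    · exact Nat.mod_lt _ (by norm_num)
  · rw [← hUa, HA]
    refine val_congr fun i hi => ?_
    rw [dig, dif_pos (show j - 1 - i < m from by omega)]
    simp only [show ((⟨j - 1 - i, by omega⟩ : Fin m) : ℕ) = j - 1 - i from rfl]
    rw [if_pos (show j - 1 - i < j from by omega)]
    congr 1
    omega
  · rw [← hVb, GB]
    refine val_congr fun i hi => ?_
    rw [dig, dif_pos (show j + i < m from by omega)]
    simp only [show ((⟨j + i, by omega⟩ : Fin m) : ℕ) = j + i from rfl]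
    rw [if_neg (show ¬ j + i < j from by omega)]
    rw [show j + i - j = i from by omega]
    have hd : dig m σ (j + i) = σ ⟨j + i, by omega⟩ := by rw [dig, dif_pos]
    rw [hd]
    have := hV i
    have := hσ (⟨j + i, by omega⟩ : Fin m)
    omega

lemma point_inj {m : ℕ} (σ x x' : Fin m → ℕ) (hσ : ∀ i, σ i < 2)
    (hx : ∀ i, x i < 2) (hx' : ∀ i, x' i < 2)
    (h : shiftedVdcPoint m σ x = shiftedVdcPoint m σ x') : x = x' := by
  rw [point_eq, point_eq] at h
  have h2 : (RB m σ x : ℝ) / 2 ^ m = (RB m σ x' : ℝ) / 2 ^ m := congrArg Prod.snd h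
  have hB : RB m σ x = RB m σ x' := by
    have hp : (0 : ℝ) < 2 ^ m := by positivity
    field_simp at h2
    exact_mod_cast h2
  funext i
  have := val_inj (fun k _ => Nat.mod_lt _ (by norm_num))
    (fun k _ => Nat.mod_lt _ (by norm_num)) hB (i : ℕ) i.isLt
  simp only [dig_coe] at this
  have b1 := hx i; have b2 := hx' i; have b3 := hσ i
  omega

end SVdC


open SVdC

/-- For any digit shift `σ ∈ {0,1}^m`, the digit-shifted Van der Corput set of `2^m` points
is a binary `(0,m,2)`-net: every dyadic rectangle of area `2^{-m}` contains exactly one of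
its points. -/
theorem shifted_vanDerCorput_is_net (m : ℕ) (σ : Fin m → ℕ) (hσ : ∀ i, σ i < 2) :
    ({p : ℝ × ℝ | ∃ x : Fin m → ℕ, (∀ i, x i < 2) ∧ p = shiftedVdcPoint m σ x}).ncard
      = 2 ^ m ∧
    ∀ j ≤ m, ∀ a < 2 ^ j, ∀ b < 2 ^ (m - j),
      ∃! p : ℝ × ℝ, (∃ x : Fin m → ℕ, (∀ i, x i < 2) ∧ p = shiftedVdcPoint m σ x) ∧
        p ∈ dyadicRect j a (m - j) b := by
  constructor
  · classical
    have hset : {p : ℝ × ℝ | ∃ x : Fin m → ℕ, (∀ i, x i < 2) ∧ p = shiftedVdcPoint m σ x}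
        = ↑((Finset.univ : Finset (Fin m → Fin 2)).image
            (fun f => shiftedVdcPoint m σ (fun i => (f i : ℕ)))) := by
      ext p
      simp only [Set.mem_setOf_eq, Finset.coe_image, Set.mem_image, Finset.mem_coe,
        Finset.mem_univ, true_and, Finset.coe_univ, Set.image_univ, Set.mem_range]
      constructor
      · rintro ⟨x, hx, rfl⟩
        exact ⟨fun i => ⟨x i, hx i⟩, rfl⟩
      · rintro ⟨f, rfl⟩
        exact ⟨fun i => (f i : ℕ), fun i => (f i).isLt, rfl⟩
    rw [hset, Set.ncard_coe_finset,
      Finset.card_image_of_injective _ (fun f g h => by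
        have := point_inj σ _ _ hσ (fun i => (f i).isLt) (fun i => (g i).isLt) h
        funext i
        exact Fin.ext (congrFun this i)),
      Finset.card_univ]
    simp [Fintype.card_fun]
  · intro j hj a ha b hb
    obtain ⟨x, hx, hHA, hGB⟩ := exists_x σ hσ hj ha hb
    refine ⟨shiftedVdcPoint m σ x, ⟨⟨x, hx, rfl⟩,
      (mem_rect_iff σ x hσ hx hj).mpr ⟨hHA, hGB⟩⟩, ?_⟩
    rintro p' ⟨⟨x', hx', rfl⟩, hmem⟩
    obtain ⟨h1, h2⟩ := (mem_rect_iff σ x' hσ hx' hj).mp hmem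
    rw [eq_of_HA_GB σ x' x hσ hx' hx hj (by rw [h1, hHA]) (by rw [h2, hGB])]
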